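/- Let g be a positive log-convex function on [a,b] and f : [a,b] → ℝ be (g,0)-convex dominated, with f(a) ≠ f(b), g(a) ≠ g(b), f positive, and f, g integrable on [a,b] (a < b). Then |(f(a) − f(b))/(ln f(a) − ln f(b)) − (1/(b-a)) ∫_a^b f(x) dx| ≤ (g(a) − g(b))/(ln g(a) − ln g(b)) − (1/(b-a)) ∫_a^b g(x) dx. -/

import Mathlib

open Real MeasureTheory intervalIntegral

lemma exp_form {c d : ℝ} (hc : 0 < c) (hd : 0 < d) (l : ℝ) :
    c ^ l * d ^ (1 - l) = d * Real.exp ((Real.log c - Real.log d) * l) := by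
  have hrhs : d * Real.exp ((Real.log c - Real.log d) * l)
      = Real.exp (Real.log d + (Real.log c - Real.log d) * l) := by
    rw [Real.exp_add, Real.exp_log hd]
  rw [hrhs, Real.rpow_def_of_pos hc, Real.rpow_def_of_pos hd, ← Real.exp_add]
  congr 1
  ring

lemma key_integral {c d : ℝ} (hc : 0 < c) (hd : 0 < d) (hne : c ≠ d) :
    ∫ l in (0:ℝ)..1, c ^ l * d ^ (1 - l) = (c - d) / (Real.log c - Real.log d) := by
  set k := Real.log c - Real.log d with hk
  have hkne : k ≠ 0 := by
    intro h
    apply hne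
    have := sub_eq_zero.mp h
    exact Real.log_injOn_pos (Set.mem_Ioi.mpr hc) (Set.mem_Ioi.mpr hd) this
  have h1 : ∫ l in (0:ℝ)..1, c ^ l * d ^ (1 - l)
      = ∫ l in (0:ℝ)..1, d * Real.exp (k * l) := by
    congr 1
    funext l
    exact exp_form hc hd l
  rw [h1, intervalIntegral.integral_const_mul]
  have h2 : ∫ l in (0:ℝ)..1, Real.exp (k * l)
      = k⁻¹ • ∫ x in (k*0)..(k*1), Real.exp x := by
    exact intervalIntegral.integral_comp_mul_left (fun x => Real.exp x) hkne
  rw [h2]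
  rw [integral_exp]
  have hek : Real.exp k = c / d := by
    rw [hk, Real.exp_sub, Real.exp_log hc, Real.exp_log hd]
  rw [mul_zero, mul_one, hek, Real.exp_zero]
  field_simp
  rw [smul_eq_mul]; field_simp

theorem log_dominated_gill (f g : ℝ → ℝ) (a b : ℝ) (hab : a < b)
    (hgpos : ∀ x ∈ Set.Icc a b, 0 < g x)
    (hfpos : ∀ x ∈ Set.Icc a b, 0 < f x)
    (hg : ∀ x ∈ Set.Icc a b, ∀ y ∈ Set.Icc a b, ∀ l ∈ Set.Icc (0:ℝ) 1,
      g (l * x + (1 - l) * y) ≤ g x ^ l * g y ^ (1 - l))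
    (hf : ∀ x ∈ Set.Icc a b, ∀ y ∈ Set.Icc a b, ∀ l ∈ Set.Icc (0:ℝ) 1,
      |f x ^ l * f y ^ (1 - l) - f (l * x + (1 - l) * y)| ≤
        g x ^ l * g y ^ (1 - l) - g (l * x + (1 - l) * y))
    (hfne : f a ≠ f b) (hgne : g a ≠ g b)
    (hfint : IntervalIntegrable f MeasureTheory.volume a b)
    (hgint : IntervalIntegrable g MeasureTheory.volume a b) :
    |(f a - f b) / (Real.log (f a) - Real.log (f b)) - (1 / (b - a)) * ∫ x in a..b, f x| ≤
      (g a - g b) / (Real.log (g a) - Real.log (g b)) - (1 / (b - a)) * ∫ x in a..b, g x := by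
  have ha : a ∈ Set.Icc a b := ⟨le_refl a, hab.le⟩
  have hb : b ∈ Set.Icc a b := ⟨hab.le, le_refl b⟩
  have hba : a - b ≠ 0 := by intro h; linarith [sub_eq_zero.mp h]
  -- substitution for arbitrary integrable h
  have subst : ∀ h : ℝ → ℝ, IntervalIntegrable h volume a b →
      (∫ l in (0:ℝ)..1, h ((a - b) * l + b)) = (1 / (b - a)) * ∫ x in a..b, h x := by
    intro h hi
    rw [intervalIntegral.integral_comp_mul_add h hba b]
    rw [mul_zero, zero_add, mul_one]
    have : a - b + b = a := by ring
    rw [this, intervalIntegral.integral_symm a b]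
    rw [smul_eq_mul, mul_neg, ← neg_mul, neg_inv, neg_sub, one_div]
  -- integrability of composition
  have comp_int : ∀ h : ℝ → ℝ, IntervalIntegrable h volume a b →
      IntervalIntegrable (fun l => h ((a - b) * l + b)) volume 0 1 := by
    intro h hi
    have h1 : IntervalIntegrable (fun x => h (x + b)) volume (a - b) (b - b) :=
      hi.comp_add_right b
    have h2 : IntervalIntegrable (fun l => h ((a - b) * l + b)) volume
        ((a - b) / (a - b)) ((b - b) / (a - b)) := h1.comp_mul_left (c := a - b)
    rw [div_self hba, sub_self, zero_div] at h2
    exact h2.symm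
  have hFint := comp_int f hfint
  have hGint := comp_int g hgint
  -- continuous integrands
  have contpow : ∀ c d : ℝ, 0 < c → 0 < d →
      IntervalIntegrable (fun l : ℝ => c ^ l * d ^ (1 - l)) volume 0 1 := by
    intro c d hc hd
    apply Continuous.intervalIntegrable
    have : (fun l : ℝ => c ^ l * d ^ (1 - l))
        = fun l : ℝ => d * Real.exp ((Real.log c - Real.log d) * l) := by
      funext l; exact exp_form hc hd l
    rw [this]
    exact continuous_const.mul (Real.continuous_exp.comp (continuous_const.mul continuous_id))
  have hφint := contpow (f a) (f b) (hfpos a ha) (hfpos b hb)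
  have hψint := contpow (g a) (g b) (hgpos a ha) (hgpos b hb)
  -- pointwise bound
  have hpt : ∀ l ∈ Set.Icc (0:ℝ) 1,
      |f a ^ l * f b ^ (1 - l) - f ((a - b) * l + b)| ≤
        g a ^ l * g b ^ (1 - l) - g ((a - b) * l + b) := by
    intro l hl
    have harg : (a - b) * l + b = l * a + (1 - l) * b := by ring
    rw [harg]
    exact hf a ha b hb l hl
  -- rewrite the goal via key_integral and subst
  rw [← key_integral (hfpos a ha) (hfpos b hb) hfne,
      ← key_integral (hgpos a ha) (hgpos b hb) hgne,
      ← subst f hfint, ← subst g hgint]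
  rw [← intervalIntegral.integral_sub hφint hFint,
      ← intervalIntegral.integral_sub hψint hGint]
  calc |∫ l in (0:ℝ)..1, (f a ^ l * f b ^ (1-l) - f ((a-b)*l + b))|
      ≤ ∫ l in (0:ℝ)..1, |f a ^ l * f b ^ (1-l) - f ((a-b)*l + b)| :=
        intervalIntegral.abs_integral_le_integral_abs zero_le_one
    _ ≤ ∫ l in (0:ℝ)..1, (g a ^ l * g b ^ (1-l) - g ((a-b)*l + b)) := by
        apply intervalIntegral.integral_mono_on zero_le_one
          ((hφint.sub hFint).abs) (hψint.sub hGint)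
        exact hpt
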